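/- Let φ₁, φ₂, φ₃ : ℤ² → ℤ be homomorphisms with φ_i(1,0) = a_i and φ_i(0,1) = b_i (i = 1, 2, 3). Then 𝓡(φ₁, φ₂, φ₃) is in bijection with the quotient (ℤ ⊕ ℤ)/⟨(a₂ − a₁, a₃ − a₁), (b₂ − b₁, b₃ − b₁)⟩. Moreover, if det D ≠ 0, where D is the 2×2 matrix with rows (a₂ − a₁, b₂ − b₁) and (a₃ − a₁, b₃ − b₁), then R(φ₁, φ₂, φ₃) = |det D| and, for j = 2, 3, R(φ₁, φ_j) = gcd(a_j − a₁, b_j − b₁) < ∞. -/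

import Mathlib

/-- The (additive) twisted conjugacy relation determined by a pair of homomorphisms. -/
def tcRelAdd {G A : Type*} [AddGroup G] [AddGroup A] (φ ψ : G →+ A) (α β : A) : Prop :=
  ∃ z : G, β = φ z + α - ψ z

/-- The relation on pairs defining the Reidemeister classes of a triple of homomorphisms
`φ₁ φ₂ φ₃ : G →+ A`. -/
def tcRel₃Add {G A : Type*} [AddGroup G] [AddGroup A] (φ₁ φ₂ φ₃ : G →+ A)
    (a b : A × A) : Prop :=
  ∃ z : G, b.1 = φ₁ z + a.1 - φ₂ z ∧ b.2 = φ₁ z + a.2 - φ₃ z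

section Aux

/-- Generic: a relation given by "difference lies in a subgroup" yields a quotient equivalent
to the group quotient. -/
def auxQuotEquiv {A : Type*} [AddCommGroup A] (r : A → A → Prop) (H : AddSubgroup A)
    (h : ∀ a b, r a b ↔ b - a ∈ H) : Quot r ≃ A ⧸ H where
  toFun := Quot.lift (fun a => (QuotientAddGroup.mk a : A ⧸ H)) (fun a b hab => by
    refine (QuotientAddGroup.eq).mpr ?_
    rw [neg_add_eq_sub]
    exact (h a b).mp hab)
  invFun := fun q => Quotient.liftOn' q (Quot.mk r) (fun a b hab => by
    refine Quot.sound ((h a b).mpr ?_)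
    rw [← neg_add_eq_sub]
    exact QuotientAddGroup.leftRel_apply.mp hab)
  left_inv := by
    intro q
    induction q using Quot.ind
    rfl
  right_inv := by
    intro q
    induction q using Quotient.inductionOn'
    rfl

@[simp] lemma auxQuotEquiv_mk {A : Type*} [AddCommGroup A] (r : A → A → Prop) (H : AddSubgroup A)
    (h : ∀ a b, r a b ↔ b - a ∈ H) (a : A) :
    auxQuotEquiv r H h (Quot.mk r a) = QuotientAddGroup.mk a := by
  simp only [auxQuotEquiv, Equiv.coe_fn_mk]

lemma aux_hom_apply {B : Type*} [AddCommGroup B] (φ : ℤ × ℤ →+ B) (m n : ℤ) :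
    φ (m, n) = m • φ (1, 0) + n • φ (0, 1) := by
  have : ((m, n) : ℤ × ℤ) = m • ((1 : ℤ), (0 : ℤ)) + n • ((0 : ℤ), (1 : ℤ)) := by
    simp [Prod.ext_iff]
  rw [this, map_add, map_zsmul, map_zsmul]

lemma aux_closure_top :
    AddSubgroup.closure {((1 : ℤ), (0 : ℤ)), ((0 : ℤ), (1 : ℤ))} = (⊤ : AddSubgroup (ℤ × ℤ)) := by
  refine le_antisymm le_top (fun x _ => ?_)
  obtain ⟨m, n⟩ := x
  have : ((m, n) : ℤ × ℤ) = m • ((1 : ℤ), (0 : ℤ)) + n • ((0 : ℤ), (1 : ℤ)) := by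
    simp [Prod.ext_iff]
  rw [this]
  exact add_mem (AddSubgroup.zsmul_mem _ (AddSubgroup.subset_closure (by simp)) m)
    (AddSubgroup.zsmul_mem _ (AddSubgroup.subset_closure (by simp)) n)

lemma aux_range_eq_closure {B : Type*} [AddCommGroup B] (Ψ : ℤ × ℤ →+ B) :
    Ψ.range = AddSubgroup.closure {Ψ (1, 0), Ψ (0, 1)} := by
  rw [AddMonoidHom.range_eq_map, ← aux_closure_top, AddMonoidHom.map_closure]
  congr 1
  rw [Set.image_insert_eq, Set.image_singleton]

/-- Membership in `zmultiples (gcd)` vs the range of a hom from `ℤ²` to `ℤ`. -/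
lemma aux_range_gcd (χ : ℤ × ℤ →+ ℤ) (x : ℤ) :
    (∃ z, χ z = x) ↔ x ∈ AddSubgroup.zmultiples ((Int.gcd (χ (1, 0)) (χ (0, 1)) : ℤ)) := by
  rw [Int.mem_zmultiples_iff]
  constructor
  · rintro ⟨⟨m, n⟩, rfl⟩
    rw [aux_hom_apply χ m n]
    simp only [smul_eq_mul]
    exact dvd_add ((Int.gcd_dvd_left _ _).mul_left m) ((Int.gcd_dvd_right _ _).mul_left n)
  · rintro ⟨c, rfl⟩
    refine ⟨(c * Int.gcdA (χ (1, 0)) (χ (0, 1)), c * Int.gcdB (χ (1, 0)) (χ (0, 1))), ?_⟩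
    rw [aux_hom_apply χ (c * Int.gcdA (χ (1, 0)) (χ (0, 1))) (c * Int.gcdB (χ (1, 0)) (χ (0, 1)))]
    simp only [smul_eq_mul]
    rw [Int.gcd_eq_gcd_ab (χ (1, 0)) (χ (0, 1))]
    ring

open Matrix in
/-- The index of the subgroup of `ℤ²` generated by two vectors `(p,q)` and `(r,s)` with
`p*s - r*q ≠ 0` is `|p*s - r*q|`. -/
lemma aux_index_closure_pair (p q r s : ℤ) (hΔ : p * s - r * q ≠ 0) :
    (AddSubgroup.closure {((p, q) : ℤ × ℤ), (r, s)}).index = (p * s - r * q).natAbs := by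
  classical
  have hli : LinearIndependent ℤ ![((p, q) : ℤ × ℤ), (r, s)] := by
    rw [Fintype.linearIndependent_iff]
    intro g hg
    rw [Fin.sum_univ_two] at hg
    have h1 := congrArg Prod.fst hg
    have h2 := congrArg Prod.snd hg
    simp only [Matrix.cons_val_zero, Matrix.cons_val_one, Matrix.head_cons, Prod.fst_add,
      Prod.snd_add, Prod.smul_fst, Prod.smul_snd, smul_eq_mul, Prod.fst_zero,
      Prod.snd_zero] at h1 h2
    have hg0 : g 0 * (p * s - r * q) = 0 := by linear_combination s * h1 - r * h2
    have hg1 : g 1 * (p * s - r * q) = 0 := by linear_combination p * h2 - q * h1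
    intro i
    fin_cases i
    · exact (mul_eq_zero.mp hg0).resolve_right hΔ
    · exact (mul_eq_zero.mp hg1).resolve_right hΔ
  set N : Submodule ℤ (ℤ × ℤ) := Submodule.span ℤ (Set.range ![((p, q) : ℤ × ℤ), (r, s)]) with hN
  have hNH : N.toAddSubgroup = AddSubgroup.closure {((p, q) : ℤ × ℤ), (r, s)} := by
    rw [hN, Submodule.span_int_eq_addSubgroupClosure]
    congr 1
    ext x
    simp only [Set.mem_range, Fin.exists_fin_two, Set.mem_insert_iff, Set.mem_singleton_iff]
    constructor
    · rintro (h | h) <;> simp [← h]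
    · rintro (h | h)
      · exact Or.inl h.symm
      · exact Or.inr h.symm
  rw [← hNH]
  let bv : Module.Basis (Fin 2) ℤ N := Module.Basis.span hli
  obtain ⟨n, snf⟩ := N.smithNormalForm (Module.Basis.finTwoProd ℤ)
  have hn : n = 2 := by simpa using Fintype.card_congr (snf.bN.indexEquiv bv)
  subst hn
  -- the index is |a 0| * |a 1|
  have hidx : N.toAddSubgroup.index = (snf.a 0).natAbs * (snf.a 1).natAbs := by
    rw [snf.toAddSubgroup_index_eq_ite, if_pos (by simp)]
    simp only [Ideal.span_singleton_toAddSubgroup_eq_zmultiples, Int.index_zmultiples]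
    rw [Fin.prod_univ_two]
  rw [hidx]
  -- determinant computations
  set A := LinearMap.toMatrix bv (Module.Basis.finTwoProd ℤ) (N.subtype) with hAdef
  have hbv : ∀ j, (N.subtype (bv j) : ℤ × ℤ) = ![((p, q) : ℤ × ℤ), (r, s)] j :=
    fun j => congrArg Subtype.val (Module.Basis.span_apply hli j)
  have hA : A = !![p, r; q, s] := by
    ext i j
    rw [hAdef, LinearMap.toMatrix_apply, hbv j, Module.Basis.coe_finTwoProd_repr]
    fin_cases i <;> fin_cases j <;> simp
  set B := LinearMap.toMatrix snf.bN snf.bM (N.subtype) with hBdef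
  have hB : ∀ i j, B i j = if i = snf.f j then snf.a j else 0 := by
    intro i j
    rw [hBdef, LinearMap.toMatrix_apply,
      show (N.subtype (snf.bN j)) = snf.a j • snf.bM (snf.f j) from snf.snf j,
      _root_.map_smul, Finsupp.smul_apply, Module.Basis.repr_self, Finsupp.single_apply, smul_eq_mul]
    rcases eq_or_ne (snf.f j) i with h | h
    · rw [if_pos h, if_pos h.symm, mul_one]
    · rw [if_neg h, if_neg (Ne.symm h), mul_zero]
  have hfbij : Function.Bijective snf.f := Finite.injective_iff_bijective.mp snf.f.injective
  set σ : Equiv.Perm (Fin 2) := Equiv.ofBijective snf.f hfbij with hσ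
  have hBsub : B = (Matrix.diagonal snf.a).submatrix σ.symm id := by
    ext i j
    rw [hB, Matrix.submatrix_apply, Matrix.diagonal_apply, id]
    have hcond : (i = snf.f j) ↔ (σ.symm i = j) := by
      rw [Equiv.symm_apply_eq]
      exact Iff.rfl
    rcases eq_or_ne i (snf.f j) with h | h
    · rw [if_pos h, if_pos (hcond.mp h), hcond.mp h]
    · rw [if_neg h, if_neg (fun hh => h (hcond.mpr hh))]
  have hBdet : B.det.natAbs = (snf.a 0).natAbs * (snf.a 1).natAbs := by
    rw [hBsub, Matrix.det_permute, Matrix.det_diagonal, Fin.prod_univ_two, Int.natAbs_mul,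
      Int.natAbs_mul]
    simp [Int.units_natAbs]
  -- change of basis
  have hcomp : A = (LinearMap.toMatrix snf.bM (Module.Basis.finTwoProd ℤ) LinearMap.id) *
      (B * (LinearMap.toMatrix bv snf.bN LinearMap.id)) := by
    rw [hBdef, ← LinearMap.toMatrix_comp bv snf.bN snf.bM, ← LinearMap.toMatrix_comp bv snf.bM]
    simp [hAdef]
  have hunit1 : IsUnit (LinearMap.toMatrix snf.bM (Module.Basis.finTwoProd ℤ) LinearMap.id).det := by
    rw [LinearMap.toMatrix_id_eq_basis_toMatrix]
    letI := (Module.Basis.finTwoProd ℤ).invertibleToMatrix snf.bM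
    exact Matrix.isUnit_det_of_invertible _
  have hunit2 : IsUnit (LinearMap.toMatrix bv snf.bN LinearMap.id).det := by
    rw [LinearMap.toMatrix_id_eq_basis_toMatrix]
    letI := snf.bN.invertibleToMatrix bv
    exact Matrix.isUnit_det_of_invertible _
  have hdetA : A.det.natAbs = B.det.natAbs := by
    rw [hcomp, Matrix.det_mul, Matrix.det_mul, Int.natAbs_mul, Int.natAbs_mul,
      Int.natAbs_of_isUnit hunit1, Int.natAbs_of_isUnit hunit2]
    ring
  have hdetA' : A.det = p * s - r * q := by rw [hA, Matrix.det_fin_two_of]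
  rw [← hBdet, ← hdetA, hdetA']

end Aux

set_option maxHeartbeats 1000000 in
/-- Let `φ₁, φ₂, φ₃ : ℤ² → ℤ` be homomorphisms with `φ_i(1,0) = a_i`, `φ_i(0,1) = b_i`.
Then `𝓡(φ₁,φ₂,φ₃)` is in bijection with
`(ℤ ⊕ ℤ) ⧸ ⟨(a₂-a₁, a₃-a₁), (b₂-b₁, b₃-b₁)⟩`.  Moreover if `det D ≠ 0`, where `D` has rows
`(a₂-a₁, b₂-b₁)` and `(a₃-a₁, b₃-b₁)`, then `R(φ₁,φ₂,φ₃) = |det D|` and, for `j = 2, 3`,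
`R(φ₁,φ_j) = gcd(a_j-a₁, b_j-b₁) < ∞`. -/
theorem reidemeister_triple_torus (φ₁ φ₂ φ₃ : ℤ × ℤ →+ ℤ) (a₁ a₂ a₃ b₁ b₂ b₃ : ℤ)
    (ha₁ : φ₁ (1, 0) = a₁) (hb₁ : φ₁ (0, 1) = b₁)
    (ha₂ : φ₂ (1, 0) = a₂) (hb₂ : φ₂ (0, 1) = b₂)
    (ha₃ : φ₃ (1, 0) = a₃) (hb₃ : φ₃ (0, 1) = b₃) :
    (∃ e : Quot (tcRel₃Add φ₁ φ₂ φ₃) ≃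
        ((ℤ × ℤ) ⧸ AddSubgroup.closure {(a₂ - a₁, a₃ - a₁), (b₂ - b₁, b₃ - b₁)}),
      ∀ a : ℤ × ℤ, e (Quot.mk _ a) = QuotientAddGroup.mk a) ∧
    ((!![a₂ - a₁, b₂ - b₁; a₃ - a₁, b₃ - b₁] : Matrix (Fin 2) (Fin 2) ℤ).det ≠ 0 →
      Nat.card (Quot (tcRel₃Add φ₁ φ₂ φ₃)) =
        (!![a₂ - a₁, b₂ - b₁; a₃ - a₁, b₃ - b₁] : Matrix (Fin 2) (Fin 2) ℤ).det.natAbs ∧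
      (ENat.card (Quot (tcRelAdd φ₁ φ₂)) < ⊤ ∧
        Nat.card (Quot (tcRelAdd φ₁ φ₂)) = Int.gcd (a₂ - a₁) (b₂ - b₁)) ∧
      (ENat.card (Quot (tcRelAdd φ₁ φ₃)) < ⊤ ∧
        Nat.card (Quot (tcRelAdd φ₁ φ₃)) = Int.gcd (a₃ - a₁) (b₃ - b₁))) := by
  -- the map recording the twisted differences
  set Ψ : ℤ × ℤ →+ ℤ × ℤ := (φ₂ - φ₁).prod (φ₃ - φ₁) with hΨ
  set H : AddSubgroup (ℤ × ℤ) :=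
    AddSubgroup.closure {(a₂ - a₁, a₃ - a₁), (b₂ - b₁, b₃ - b₁)} with hH
  have hΨ10 : Ψ (1, 0) = (a₂ - a₁, a₃ - a₁) := by
    simp [hΨ, AddMonoidHom.prod_apply, ha₁, ha₂, ha₃]
  have hΨ01 : Ψ (0, 1) = (b₂ - b₁, b₃ - b₁) := by
    simp [hΨ, AddMonoidHom.prod_apply, hb₁, hb₂, hb₃]
  have hrange : Ψ.range = H := by
    rw [aux_range_eq_closure, hΨ10, hΨ01]
  have hrel : ∀ x y : ℤ × ℤ, tcRel₃Add φ₁ φ₂ φ₃ x y ↔ y - x ∈ H := by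
    intro x y
    rw [← hrange]
    constructor
    · rintro ⟨z, h1, h2⟩
      refine ⟨-z, ?_⟩
      have e1 : ((φ₂ - φ₁) (-z)) = y.1 - x.1 := by
        simp only [AddMonoidHom.sub_apply, map_neg]
        rw [h1]; ring
      have e2 : ((φ₃ - φ₁) (-z)) = y.2 - x.2 := by
        simp only [AddMonoidHom.sub_apply, map_neg]
        rw [h2]; ring
      exact Prod.ext e1 e2
    · rintro ⟨z, hz⟩
      refine ⟨-z, ?_, ?_⟩
      · have := congrArg Prod.fst hz
        simp only [hΨ, AddMonoidHom.prod_apply, AddMonoidHom.sub_apply, Prod.fst_sub] at this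
        simp only [map_neg]
        linear_combination -this
      · have := congrArg Prod.snd hz
        simp only [hΨ, AddMonoidHom.prod_apply, AddMonoidHom.sub_apply, Prod.snd_sub] at this
        simp only [map_neg]
        linear_combination -this
  refine ⟨⟨auxQuotEquiv _ H hrel, fun a => rfl⟩, fun hdet => ?_⟩
  rw [Matrix.det_fin_two_of] at hdet
  -- main cardinality
  have hcard3 : Nat.card (Quot (tcRel₃Add φ₁ φ₂ φ₃)) =
      ((a₂ - a₁) * (b₃ - b₁) - (b₂ - b₁) * (a₃ - a₁)).natAbs := by
    rw [Nat.card_congr (auxQuotEquiv _ H hrel)]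
    have := aux_index_closure_pair (a₂ - a₁) (a₃ - a₁) (b₂ - b₁) (b₃ - b₁) hdet
    rw [AddSubgroup.index] at this
    exact this
  refine ⟨by rw [Matrix.det_fin_two_of]; exact hcard3, ?_, ?_⟩
  -- the two pair cases
  · set χ : ℤ × ℤ →+ ℤ := φ₂ - φ₁ with hχ
    have hχ10 : χ (1, 0) = a₂ - a₁ := by simp [hχ, ha₁, ha₂]
    have hχ01 : χ (0, 1) = b₂ - b₁ := by simp [hχ, hb₁, hb₂]
    set d : ℕ := Int.gcd (a₂ - a₁) (b₂ - b₁) with hd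
    have hrel2 : ∀ α β : ℤ, tcRelAdd φ₁ φ₂ α β ↔ β - α ∈ AddSubgroup.zmultiples ((d : ℤ)) := by
      intro α β
      have : β - α ∈ AddSubgroup.zmultiples ((d : ℤ)) ↔ ∃ z, χ z = β - α := by
        rw [aux_range_gcd χ, hχ10, hχ01, hd]
      rw [this]
      constructor
      · rintro ⟨z, h1⟩
        refine ⟨-z, ?_⟩
        simp only [hχ, AddMonoidHom.sub_apply, map_neg]
        rw [h1]; ring
      · rintro ⟨z, hz⟩
        refine ⟨-z, ?_⟩
        simp only [hχ, AddMonoidHom.sub_apply] at hz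
        simp only [map_neg]
        linear_combination -hz
    have hd0 : d ≠ 0 := by
      intro h0
      rw [hd] at h0
      obtain ⟨h1, h2⟩ := Int.gcd_eq_zero_iff.mp h0
      rw [h1, h2] at hdet
      simp at hdet
    haveI : NeZero d := ⟨hd0⟩
    have e2 : Quot (tcRelAdd φ₁ φ₂) ≃ ZMod d :=
      (auxQuotEquiv _ _ hrel2).trans (Int.quotientZMultiplesNatEquivZMod d).toEquiv
    haveI : Finite (Quot (tcRelAdd φ₁ φ₂)) := Finite.of_equiv _ e2.symm
    haveI : Fintype (Quot (tcRelAdd φ₁ φ₂)) := Fintype.ofFinite _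
    constructor
    · rw [ENat.card_eq_coe_fintype_card]
      exact ENat.coe_lt_top _
    · rw [Nat.card_congr e2, Nat.card_zmod]
  · set χ : ℤ × ℤ →+ ℤ := φ₃ - φ₁ with hχ
    have hχ10 : χ (1, 0) = a₃ - a₁ := by simp [hχ, ha₁, ha₃]
    have hχ01 : χ (0, 1) = b₃ - b₁ := by simp [hχ, hb₁, hb₃]
    set d : ℕ := Int.gcd (a₃ - a₁) (b₃ - b₁) with hd
    have hrel2 : ∀ α β : ℤ, tcRelAdd φ₁ φ₃ α β ↔ β - α ∈ AddSubgroup.zmultiples ((d : ℤ)) := by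
      intro α β
      have : β - α ∈ AddSubgroup.zmultiples ((d : ℤ)) ↔ ∃ z, χ z = β - α := by
        rw [aux_range_gcd χ, hχ10, hχ01, hd]
      rw [this]
      constructor
      · rintro ⟨z, h1⟩
        refine ⟨-z, ?_⟩
        simp only [hχ, AddMonoidHom.sub_apply, map_neg]
        rw [h1]; ring
      · rintro ⟨z, hz⟩
        refine ⟨-z, ?_⟩
        simp only [hχ, AddMonoidHom.sub_apply] at hz
        simp only [map_neg]
        linear_combination -hz
    have hd0 : d ≠ 0 := by
      intro h0
      rw [hd] at h0
      obtain ⟨h1, h2⟩ := Int.gcd_eq_zero_iff.mp h0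
      rw [h1, h2] at hdet
      simp at hdet
    haveI : NeZero d := ⟨hd0⟩
    have e2 : Quot (tcRelAdd φ₁ φ₃) ≃ ZMod d :=
      (auxQuotEquiv _ _ hrel2).trans (Int.quotientZMultiplesNatEquivZMod d).toEquiv
    haveI : Finite (Quot (tcRelAdd φ₁ φ₃)) := Finite.of_equiv _ e2.symm
    haveI : Fintype (Quot (tcRelAdd φ₁ φ₃)) := Fintype.ofFinite _
    constructor
    · rw [ENat.card_eq_coe_fintype_card]
      exact ENat.coe_lt_top _
    · rw [Nat.card_congr e2, Nat.card_zmod]
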